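/- Let $n \ge 3$ be an integer, and let $p(t)$ be a polynomial of degree $n$ with real coefficients such that $p(0) = 1$ and $p(-1) = p(-2) = \cdots = p(-n+3) = 0$ (no conditions if $n = 3$). Write the leading coefficient of $p$ as $d/n!$ and the coefficient of $t^{n-1}$ as $(\beta + dr)/(2(n-1)!)$ for real numbers $d, \beta, r$ with $d \ge 1$, $\beta \ge 0$, $r > n - 3$. If additionally $(-1)^n p(-n+2) \ge 0$, then $p(1) > 0$. -/

import Mathlib

open Polynomial Finset

lemma prod_cast_fact (m : ℕ) : ∏ j ∈ Finset.range m, ((j:ℝ)+1) = Nat.factorial m := by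
  induction m with
  | zero => simp
  | succ m ih => rw [Finset.prod_range_succ, ih]; push_cast [Nat.factorial_succ]; ring

lemma prod_cast_fact' (m : ℕ) : ∏ j ∈ Finset.range m, ((j:ℝ)+2) = Nat.factorial (m+1) := by
  induction m with
  | zero => simp
  | succ m ih => rw [Finset.prod_range_succ, ih]; push_cast [Nat.factorial_succ]; ring

lemma prod_desc (m : ℕ) : ∏ j ∈ Finset.range m, ((m:ℝ) - (j:ℝ)) = Nat.factorial m := by
  induction m with
  | zero => simp
  | succ m ih =>
    rw [Finset.prod_range_succ']
    have h1 : (∏ j ∈ Finset.range m, (((m+1:ℕ):ℝ) - ((j+1:ℕ):ℝ))) =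
        ∏ j ∈ Finset.range m, ((m:ℝ) - (j:ℝ)) :=
      Finset.prod_congr rfl (fun j _ => by push_cast; ring)
    rw [h1, ih]
    push_cast [Nat.factorial_succ]; ring

lemma sum_cast_gauss (m : ℕ) : ∑ j ∈ Finset.range m, ((j:ℝ)+1) = (m:ℝ)*((m:ℝ)+1)/2 := by
  induction m with
  | zero => simp
  | succ m ih => rw [Finset.sum_range_succ, ih]; push_cast; ring


lemma aux_dvd (m : ℕ) : ∀ (p : Polynomial ℝ), (∀ j < m, p.eval (-((j:ℝ)+1)) = 0) →
    (∏ j ∈ Finset.range m, (X + C ((j:ℝ)+1))) ∣ p := by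
  induction m with
  | zero => intro p _; simp
  | succ m ih =>
    intro p hp
    have h1 : (X + C ((m:ℝ)+1)) ∣ p := by
      have h' : IsRoot p (-((m:ℝ)+1)) := hp m (by omega)
      have heq : X + C ((m:ℝ)+1) = X - C (-((m:ℝ)+1)) := by rw [map_neg, sub_neg_eq_add]
      rw [heq]
      exact (dvd_iff_isRoot).mpr h'
    obtain ⟨p', rfl⟩ := h1
    have h2 : ∀ j < m, p'.eval (-((j:ℝ)+1)) = 0 := by
      intro j hj
      have h3 := hp j (by omega)
      rw [eval_mul] at h3
      have hne : eval (-((j:ℝ)+1)) (X + C ((m:ℝ)+1)) ≠ 0 := by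
        simp only [eval_add, eval_X, eval_C]
        have : (j:ℝ) < m := by exact_mod_cast hj
        nlinarith
      exact (mul_eq_zero.mp h3).resolve_left hne
    rw [Finset.prod_range_succ, mul_comm (X + C ((m:ℝ)+1)) p']
    exact mul_dvd_mul_right (ih p' h2) _



set_option maxHeartbeats 1000000 in
/-- Ambro's non-vanishing lemma, arithmetic core: a degree-`n` real polynomial
with `p 0 = 1`, `p (-1) = ⋯ = p (-(n-3)) = 0`, leading coefficient `d / n!`,
coefficient of `t^(n-1)` equal to `(β + d r)/(2 (n-1)!)`, with `d ≥ 1`, `β ≥ 0`,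
`r > n - 3`, and `(-1)^n p (-(n-2)) ≥ 0`, satisfies `p 1 > 0`. -/
theorem stmt0 (n : ℕ) (hn : 3 ≤ n) (p : Polynomial ℝ) (d β r : ℝ)
    (hdeg : p.natDegree = n)
    (hp0 : p.eval 0 = 1)
    (hvan : ∀ j : ℕ, 1 ≤ j → j ≤ n - 3 → p.eval (-(j : ℝ)) = 0)
    (hlead : p.coeff n = d / (Nat.factorial n))
    (hcoeff : p.coeff (n - 1) = (β + d * r) / (2 * (Nat.factorial (n - 1))))
    (hd : 1 ≤ d) (hβ : 0 ≤ β) (hr : r > (n : ℝ) - 3)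
    (hpos : 0 ≤ (-1 : ℝ) ^ n * p.eval (-((n : ℝ) - 2))) :
    0 < p.eval 1 := by
  obtain ⟨m, rfl⟩ : ∃ m, n = m + 3 := ⟨n - 3, by omega⟩
  clear hn
  set s : Polynomial ℝ := ∏ j ∈ Finset.range m, (X + C ((j:ℝ)+1)) with hs
  clear_value s
  have hsdvd : s ∣ p := by
    rw [hs]
    apply aux_dvd
    intro j hj
    have h := hvan (j+1) (by omega) (by omega)
    push_cast at h
    exact h
  have hsmonic : s.Monic := by
    rw [hs]; exact monic_prod_of_monic _ _ (fun j _ => monic_X_add_C _)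
  have hsdeg : s.natDegree = m := by
    have h := Polynomial.natDegree_prod (Finset.range m)
      (fun j => (X : Polynomial ℝ) + C ((j:ℝ)+1)) (fun j _ => (monic_X_add_C _).ne_zero)
    simp only [natDegree_X_add_C] at h
    rw [hs, h, Finset.sum_const, Finset.card_range, smul_eq_mul, mul_one]
  obtain ⟨q, hq⟩ := hsdvd
  have hpne : p ≠ 0 := fun h => by simp [h] at hp0
  have hqne : q ≠ 0 := by rintro rfl; rw [mul_zero] at hq; exact hpne hq
  have hqdeg : q.natDegree = 3 := by
    have h := natDegree_mul hsmonic.ne_zero hqne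
    rw [← hq, hdeg, hsdeg] at h; omega
  set a := q.coeff 3 with hadef
  set b := q.coeff 2 with hbdef
  set c := q.coeff 1 with hcdef
  set e := q.coeff 0 with hedef
  clear_value a b c e
  have hqlead : q.leadingCoeff = a := by rw [leadingCoeff, hqdeg, hadef]
  -- leading coefficient
  have ha : a = d / Nat.factorial (m+3) := by
    rw [← hlead, hq, show m + 3 = s.natDegree + q.natDegree by rw [hsdeg, hqdeg],
      coeff_mul_degree_add_degree, hsmonic.leadingCoeff, one_mul, hqlead]
  have hfac3pos : (0:ℝ) < Nat.factorial (m+3) := by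
    exact_mod_cast Nat.factorial_pos (m+3)
  have hapos : 0 < a := by rw [ha]; positivity
  have hane : a ≠ 0 := ne_of_gt hapos
  -- second coefficient
  set w := s * (q * C a⁻¹) with hw
  clear_value w
  have hq'monic : (q * C a⁻¹).Monic := by
    have h := monic_mul_leadingCoeff_inv hqne
    rwa [hqlead] at h
  have hwmonic : w.Monic := by rw [hw]; exact hsmonic.mul hq'monic
  have hpw : p = w * C a := by
    rw [hw, mul_assoc, mul_assoc, ← C_mul, inv_mul_cancel₀ hane, C_1, mul_one, hq]
  have hq'deg : (q * C a⁻¹).natDegree = 3 := by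
    rw [natDegree_mul hqne (by simp [hane] : C a⁻¹ ≠ 0), natDegree_C, hqdeg]
  have hwdeg : w.natDegree = m + 3 := by
    rw [hw, natDegree_mul hsmonic.ne_zero hq'monic.ne_zero, hsdeg, hq'deg]
  have hnexts : s.nextCoeff = (m:ℝ)*((m:ℝ)+1)/2 := by
    rw [hs, Monic.nextCoeff_prod _ _ (fun j _ => monic_X_add_C _)]
    simp only [nextCoeff_X_add_C]
    exact sum_cast_gauss m
  have hnextq' : (q * C a⁻¹).nextCoeff = b * a⁻¹ := by
    rw [nextCoeff_of_natDegree_pos (by rw [hq'deg]; norm_num), hq'deg,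
      show 3-1=2 from rfl, coeff_mul_C, ← hbdef]
  have hb : (m:ℝ)*((m:ℝ)+1)/2 * a + b = (β + d * r) / (2 * ((Nat.factorial (m+2) : ℕ) : ℝ)) := by
    have h1 : p.coeff (m+2) = w.coeff (m+2) * a := by rw [hpw, coeff_mul_C]
    have h2 : w.nextCoeff = s.nextCoeff + (q * C a⁻¹).nextCoeff := by
      rw [hw]; exact hsmonic.nextCoeff_mul hq'monic
    have h2' : w.coeff (m+2) = s.nextCoeff + (q * C a⁻¹).nextCoeff := by
      rw [← h2, nextCoeff_of_natDegree_pos (by rw [hwdeg]; omega), hwdeg]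
      norm_num
    have h3 : m + 3 - 1 = m + 2 := rfl
    rw [h3] at hcoeff
    rw [h1, h2', hnexts, hnextq'] at hcoeff
    rw [← hcoeff]
    field_simp
  -- evaluations
  have hqeval : ∀ x : ℝ, q.eval x = a*x^3 + b*x^2 + c*x + e := by
    intro x
    rw [eval_eq_sum_range, hqdeg]
    simp [Finset.sum_range_succ]
    rw [← hadef, ← hbdef, ← hcdef, ← hedef]
    ring
  have hseval : ∀ x : ℝ, s.eval x = ∏ j ∈ Finset.range m, (x + ((j:ℝ)+1)) := by
    intro x; rw [hs, eval_prod]; simp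
  have hs0 : s.eval 0 = Nat.factorial m := by
    rw [hseval]; simpa using prod_cast_fact m
  have hs1 : s.eval 1 = Nat.factorial (m+1) := by
    rw [hseval]
    rw [show (∏ j ∈ Finset.range m, ((1:ℝ) + ((j:ℝ)+1))) = ∏ j ∈ Finset.range m, ((j:ℝ)+2)
      from Finset.prod_congr rfl (fun j _ => by ring)]
    exact prod_cast_fact' m
  have hsm : s.eval (-((m:ℝ)+1)) = (-1)^m * Nat.factorial m := by
    rw [hseval]
    rw [show (∏ j ∈ Finset.range m, (-((m:ℝ)+1) + ((j:ℝ)+1)))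
        = ∏ j ∈ Finset.range m, (-1) * ((m:ℝ) - (j:ℝ))
      from Finset.prod_congr rfl (fun j _ => by ring)]
    rw [Finset.prod_mul_distrib, Finset.prod_const, Finset.card_range, prod_desc]
  have hfacm : (0:ℝ) < Nat.factorial m := by exact_mod_cast Nat.factorial_pos m
  -- p(0) = 1
  have he : (Nat.factorial m : ℝ) * e = 1 := by
    have h := hp0
    rw [hq, eval_mul, hs0, hqeval] at h
    simpa using h
  have hepos : 0 < e := by nlinarith [hfacm, he]
  -- hpos gives q(-(m+1)) ≤ 0
  have hqneg : q.eval (-((m:ℝ)+1)) ≤ 0 := by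
    have hcast : -(((m+3:ℕ):ℝ) - 2) = -((m:ℝ)+1) := by push_cast; ring
    rw [hcast, hq, eval_mul, hsm] at hpos
    have h2 : (-1:ℝ)^(m+3) * ((-1:ℝ)^m * (Nat.factorial m : ℝ))
        = -(Nat.factorial m : ℝ) := by
      rw [← mul_assoc, ← pow_add,
        show ((-1:ℝ))^(m+3+m) = -1 from Odd.neg_one_pow ⟨m+1, by omega⟩]
      ring
    rw [← mul_assoc, h2] at hpos
    nlinarith [hfacm, hpos]
  -- arithmetic endgame
  have hrr : r > (m:ℝ) := by push_cast at hr; linarith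
  have hfac2pos : (0:ℝ) < ((Nat.factorial (m+2) : ℕ) : ℝ) := by
    exact_mod_cast Nat.factorial_pos (m+2)
  have hfacrel : ((Nat.factorial (m+3) : ℕ) : ℝ)
      = ((m:ℝ)+3) * ((Nat.factorial (m+2) : ℕ) : ℝ) := by
    rw [show m+3 = (m+2)+1 from rfl, Nat.factorial_succ]; push_cast; ring
  set F2 := ((Nat.factorial (m+2) : ℕ) : ℝ) with hF2def
  clear_value F2
  have ha' : a = d / (((m:ℝ)+3) * F2) := by rw [ha, hfacrel]
  have hF2ne : F2 ≠ 0 := ne_of_gt hfac2pos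
  have hkey : 0 < b - a * (m:ℝ) := by
    have h2 : a * ((m:ℝ)*((m:ℝ)+1)/2 + (m:ℝ)) = d * (m:ℝ) / (2 * F2) := by
      rw [ha']
      have hm3 : ((m:ℝ)+3) ≠ 0 := by positivity
      field_simp
      ring
    have hb' : b = (β + d * r) / (2 * F2) - (m:ℝ)*((m:ℝ)+1)/2 * a := by linarith [hb]
    have h3 : (m:ℝ)*((m:ℝ)+1)/2 * a + a * (m:ℝ) = d * (m:ℝ)/(2*F2) := by
      rw [← h2]; ring
    have h4 : (β + d*r)/(2*F2) - (β + d*(r-(m:ℝ)))/(2*F2) = d*(m:ℝ)/(2*F2) := by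
      field_simp; ring
    have h1 : b - a*(m:ℝ) = (β + d*(r - (m:ℝ)))/(2*F2) := by linarith [hb', h3, h4]
    rw [h1]
    have h5 : 0 < β + d * (r - (m:ℝ)) := by nlinarith
    positivity
  have hq1pos : 0 < q.eval 1 := by
    rw [hqeval]
    rw [hqeval] at hqneg
    set M := (m:ℝ) + 1 with hM
    clear_value M
    have hMpos : 0 < M := by rw [hM]; positivity
    have hiden : M * (a*1^3 + b*1^2 + c*1 + e)
        = (M+1) * (M*(b - a*(m:ℝ)) + e) + (-(a*(-M)^3 + b*(-M)^2 + c*(-M) + e)) := by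
      rw [hM]; ring
    have h4 : 0 < (M+1) * (M*(b - a*(m:ℝ)) + e) :=
      mul_pos (by linarith) (by nlinarith [mul_pos hMpos hkey])
    have h5 : 0 < M * (a*1^3 + b*1^2 + c*1 + e) := by rw [hiden]; linarith [h4, hqneg]
    rcases mul_pos_iff.mp h5 with ⟨_, h6⟩ | ⟨h6, _⟩
    · linarith
    · linarith [hMpos]
  have hp1 : p.eval 1 = Nat.factorial (m+1) * q.eval 1 := by
    rw [hq, eval_mul, hs1]
  rw [hp1]
  have hfac1pos : (0:ℝ) < Nat.factorial (m+1) := by exact_mod_cast Nat.factorial_pos (m+1)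
  exact mul_pos hfac1pos hq1pos
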